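/- For all (t, r) and (t₀, r₀) in ℂ × ℝ with |t|² < r and |t₀|² < r₀, one has −ln(1 − |t|²/r) ≥ −ln(1 − |t₀|²/r₀) + 2·Re( conj(t₀)·(t − t₀) )/(r₀ − |t₀|²) − |t₀|²·(r − r₀)/( r₀·(r₀ − |t₀|²) ). -/

import Mathlib

/-- first-order (tangent-plane) lower bound of the jointly convex function
`(t, r) ↦ −ln(1 − |t|²/r)` on `{(t, r) : |t|² < r}`. -/
theorem stmt1 (t t₀ : ℂ) (r r₀ : ℝ)
    (h : ‖t‖ ^ 2 < r) (h₀ : ‖t₀‖ ^ 2 < r₀) :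
    -Real.log (1 - ‖t‖ ^ 2 / r) ≥
      -Real.log (1 - ‖t₀‖ ^ 2 / r₀)
        + 2 * ((starRingEnd ℂ t₀) * (t - t₀)).re / (r₀ - ‖t₀‖ ^ 2)
        - ‖t₀‖ ^ 2 * (r - r₀) / (r₀ * (r₀ - ‖t₀‖ ^ 2)) := by
  set a := ‖t‖ ^ 2 with ha
  set a₀ := ‖t₀‖ ^ 2 with ha₀
  have hane : (0:ℝ) ≤ a := sq_nonneg _
  have ha₀ne : (0:ℝ) ≤ a₀ := sq_nonneg _
  have hr : (0:ℝ) < r := lt_of_le_of_lt hane h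
  have hr₀ : (0:ℝ) < r₀ := lt_of_le_of_lt ha₀ne h₀
  have hra : (0:ℝ) < r - a := by linarith
  have hra₀ : (0:ℝ) < r₀ - a₀ := by linarith
  have hX : (0:ℝ) < 1 - a / r := by
    rw [sub_pos, div_lt_one hr]; exact h
  have hX₀ : (0:ℝ) < 1 - a₀ / r₀ := by
    rw [sub_pos, div_lt_one hr₀]; exact h₀
  -- real part bound
  have hre : ((starRingEnd ℂ t₀) * (t - t₀)).re ≤ ‖t₀‖ * ‖t‖ - a₀ := by
    have h1 : (starRingEnd ℂ t₀) * (t - t₀) = (starRingEnd ℂ t₀) * t - (Complex.normSq t₀ : ℂ) := by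
      rw [mul_sub, ← Complex.normSq_eq_conj_mul_self]
    rw [h1]
    have h2 : ((starRingEnd ℂ t₀) * t).re ≤ ‖t₀‖ * ‖t‖ := by
      calc ((starRingEnd ℂ t₀) * t).re ≤ ‖(starRingEnd ℂ t₀) * t‖ := Complex.re_le_norm _
        _ = ‖t₀‖ * ‖t‖ := by rw [norm_mul, Complex.norm_conj]
    have h3 : Complex.normSq t₀ = a₀ := Complex.normSq_eq_norm_sq t₀
    simp only [Complex.sub_re, Complex.ofReal_re]
    linarith
  -- AM-GM : 2|t₀||t| r r₀ ≤ a₀ r² + a r₀²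
  have hamgm : 2 * (‖t₀‖ * ‖t‖) * (r * r₀) ≤ a₀ * r ^ 2 + a * r₀ ^ 2 := by
    nlinarith [sq_nonneg (‖t₀‖ * r - ‖t‖ * r₀), norm_nonneg t,
      norm_nonneg t₀]
  -- log inequality
  have hlog : Real.log (1 - a / r) - Real.log (1 - a₀ / r₀) ≤ (1 - a / r) / (1 - a₀ / r₀) - 1 := by
    rw [← Real.log_div (ne_of_gt hX) (ne_of_gt hX₀)]
    exact Real.log_le_sub_one_of_pos (div_pos hX hX₀)
  -- algebraic bound
  have key : (1 - a / r) / (1 - a₀ / r₀) - 1 ≤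
      -(2 * ((starRingEnd ℂ t₀) * (t - t₀)).re / (r₀ - a₀)
        - a₀ * (r - r₀) / (r₀ * (r₀ - a₀))) := by
    have hRe := hre
    rw [div_sub_one (ne_of_gt hX₀)]
    rw [div_le_iff₀ hX₀]
    have expand : (1 - a / r - (1 - a₀ / r₀)) = a₀ / r₀ - a / r := by ring
    rw [expand]
    rw [neg_sub, sub_mul, div_mul_eq_mul_div, div_mul_eq_mul_div]
    have h1 : a₀ * (r - r₀) * (1 - a₀ / r₀) / (r₀ * (r₀ - a₀)) = a₀ * (r - r₀) / r₀ ^ 2 := by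
      rw [div_eq_div_iff (by positivity) (by positivity)]
      field_simp
    have h2 : 2 * ((starRingEnd ℂ t₀) * (t - t₀)).re * (1 - a₀ / r₀) / (r₀ - a₀)
        = 2 * ((starRingEnd ℂ t₀) * (t - t₀)).re / r₀ := by
      rw [div_eq_div_iff (by positivity) (ne_of_gt hr₀)]
      field_simp
    rw [h1, h2]
    rw [div_sub_div _ _ (ne_of_gt hr₀) (ne_of_gt hr)]
    rw [div_sub_div _ _ (by positivity : (r₀:ℝ)^2 ≠ 0) (ne_of_gt hr₀)]
    rw [div_le_div_iff₀ (by positivity) (by positivity)]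
    nlinarith [mul_pos hr hr₀, sq_nonneg r₀, hr.le, hr₀.le,
      mul_le_mul_of_nonneg_right hRe (by positivity : (0:ℝ) ≤ 2 * (r * r₀ * r₀)),
      hamgm, mul_pos (mul_pos hr hr₀) hr₀]
  linarith [hlog, key]
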